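/- Let p > 2 be a real number. Then f(u) tends to 0 as u tends to 0 from within the open interval (0,1). -/

import Mathlib

/-- The function f from Lemma 1 of the paper. -/
noncomputable def f (p u : ℝ) : ℝ :=
  (1 - u ^ (2:ℝ)) ^ p / (1 + u ^ p) *
    ((1 + u ^ (p - 1)) ^ (p / (p - 1)) - (1 - u ^ (p - 1)) ^ (p / (p - 1))) /
    ((1 + u) ^ p * (1 - u ^ (p - 1)) ^ (p / (p - 1)) -
      (1 - u) ^ p * (1 + u ^ (p - 1)) ^ (p / (p - 1)))

open Filter Set Real in
theorem stmt_9 (p : ℝ) (hp : 2 < p) :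
    Filter.Tendsto (f p) (nhdsWithin 0 (Set.Ioo 0 1)) (nhds 0) := by
  have hp1 : (1:ℝ) ≤ p - 1 := by linarith
  have hp2 : p - 2 ≠ 0 := by intro h; linarith
  have hp1' : p - 1 ≠ 0 := by intro h; linarith
  have hp0 : (0:ℝ) < p := by linarith
  set q := p / (p - 1) with hqdef
  set F := nhdsWithin (0:ℝ) (Set.Ioo 0 1) with hF
  set φ : ℝ → ℝ := fun t => (1+t)^q - (1-t)^q with hφdef
  set D : ℝ → ℝ := fun u => (1+u)^p * (1-u^(p-1))^q - (1-u)^p * (1+u^(p-1))^q with hDdef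
  -- derivative of φ at 0 is 2q
  have hφd : HasDerivAt φ (2*q) 0 := by
    have h1 : HasDerivAt (fun t : ℝ => (1+t)^q) (1 * q * (1+(0:ℝ))^(q-1)) 0 :=
      HasDerivAt.rpow_const ((hasDerivAt_id (0:ℝ)).const_add 1) (Or.inl (by norm_num))
    have h2 : HasDerivAt (fun t : ℝ => (1-t)^q) ((-1) * q * (1-(0:ℝ))^(q-1)) 0 :=
      HasDerivAt.rpow_const ((hasDerivAt_id (0:ℝ)).const_sub 1) (Or.inl (by norm_num))
    have h := h1.sub h2
    norm_num [Real.one_rpow] at h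
    exact h.congr_deriv (by ring)
  -- derivative of D at 0 is 2p
  have hg : HasDerivAt (fun u : ℝ => u^(p-1)) 0 0 := by
    have := Real.hasDerivAt_rpow_const (x := (0:ℝ)) (p := p-1) (Or.inr hp1)
    simpa [Real.zero_rpow (show p-1-1 ≠ 0 by intro h; linarith)] using this
  have hDd : HasDerivAt D (2*p) 0 := by
    have hA1 : HasDerivAt (fun u : ℝ => (1+u)^p) (1 * p * (1+(0:ℝ))^(p-1)) 0 :=
      HasDerivAt.rpow_const ((hasDerivAt_id (0:ℝ)).const_add 1) (Or.inl (by norm_num))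
    have hA3 : HasDerivAt (fun u : ℝ => (1-u)^p) ((-1) * p * (1-(0:ℝ))^(p-1)) 0 :=
      HasDerivAt.rpow_const ((hasDerivAt_id (0:ℝ)).const_sub 1) (Or.inl (by norm_num))
    have hA2 : HasDerivAt (fun u : ℝ => (1-u^(p-1))^q) ((-0) * q * (1-(0:ℝ)^(p-1))^(q-1)) 0 :=
      HasDerivAt.rpow_const (hg.const_sub 1) (Or.inl (by norm_num [Real.zero_rpow hp1']))
    have hA4 : HasDerivAt (fun u : ℝ => (1+u^(p-1))^q) (0 * q * (1+(0:ℝ)^(p-1))^(q-1)) 0 :=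
      HasDerivAt.rpow_const (hg.const_add 1) (Or.inl (by norm_num [Real.zero_rpow hp1']))
    have h := (hA1.mul hA2).sub (hA3.mul hA4)
    norm_num [Real.one_rpow, Real.zero_rpow hp1'] at h
    exact h.congr_deriv (by ring)
  -- tendsto of powers into punctured/positive sets
  have hmem : ∀ᶠ u in F, u ∈ Set.Ioo (0:ℝ) 1 := self_mem_nhdsWithin
  have hrpow0 : ∀ r : ℝ, 0 < r → Tendsto (fun u : ℝ => u ^ r) F (nhds 0) := by
    intro r hr
    have : ContinuousAt (fun u : ℝ => u ^ r) 0 :=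
      Real.continuousAt_rpow_const 0 r (Or.inr hr.le)
    have h := this.tendsto
    rw [Real.zero_rpow hr.ne'] at h
    exact h.mono_left nhdsWithin_le_nhds
  have hS : Tendsto (fun u : ℝ => u ^ (p-1)) F (nhdsWithin 0 {(0:ℝ)}ᶜ) := by
    rw [tendsto_nhdsWithin_iff]
    refine ⟨hrpow0 _ (by linarith), ?_⟩
    filter_upwards [hmem] with u hu
    exact (Real.rpow_pos_of_pos hu.1 _).ne'
  have hFle : F ≤ nhdsWithin 0 {(0:ℝ)}ᶜ :=
    nhdsWithin_mono 0 (fun x hx => ne_of_gt hx.1)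
  -- slope limits
  have hφslope : Tendsto (fun u : ℝ => φ (u^(p-1)) / u^(p-1)) F (nhds (2*q)) := by
    have h := hasDerivAt_iff_tendsto_slope.mp hφd
    have h2 : Tendsto (fun t : ℝ => φ t / t) (nhdsWithin 0 {(0:ℝ)}ᶜ) (nhds (2*q)) := by
      refine h.congr fun t => ?_
      simp [slope_def_field, hφdef, Real.one_rpow]
    exact h2.comp hS
  have hDslope : Tendsto (fun u : ℝ => D u / u) F (nhds (2*p)) := by
    have h := hasDerivAt_iff_tendsto_slope.mp hDd
    have h2 : Tendsto (fun u : ℝ => D u / u) (nhdsWithin 0 {(0:ℝ)}ᶜ) (nhds (2*p)) := by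
      refine h.congr fun u => ?_
      simp [slope_def_field, hDdef, Real.one_rpow, Real.zero_rpow hp1']
    exact h2.mono_left hFle
  -- N tendsto 1
  have hN : Tendsto (fun u : ℝ => (1 - u ^ (2:ℝ)) ^ p / (1 + u ^ p)) F (nhds 1) := by
    have h1 : Tendsto (fun u : ℝ => (1 - u ^ (2:ℝ)) ^ p) F (nhds 1) := by
      have h0 : Tendsto (fun u : ℝ => 1 - u ^ (2:ℝ)) F (nhds (1 - 0)) :=
        (tendsto_const_nhds (x := (1:ℝ))).sub (hrpow0 2 (by norm_num))
      have := h0.rpow_const (p := p) (Or.inl (by norm_num))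
      simpa [Real.one_rpow] using this
    have h2 : Tendsto (fun u : ℝ => 1 + u ^ p) F (nhds 1) := by
      have h0 : Tendsto (fun u : ℝ => 1 + u ^ p) F (nhds (1 + 0)) :=
        (tendsto_const_nhds (x := (1:ℝ))).add (hrpow0 p hp0)
      simpa using h0
    have h3 : Tendsto (fun u : ℝ => (1 - u ^ (2:ℝ)) ^ p / (1 + u ^ p)) F (nhds (1/1)) :=
      h1.div h2 one_ne_zero
    simpa using h3
  -- u / D u tendsto (2p)⁻¹
  have hinv : Tendsto (fun u : ℝ => u / D u) F (nhds (2*p)⁻¹) := by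
    have h := hDslope.inv₀ (by positivity)
    refine h.congr fun u => ?_
    rw [inv_div]
  have hs : Tendsto (fun u : ℝ => u ^ (p-2)) F (nhds 0) := hrpow0 _ (by linarith)
  -- combined limit
  have hG : Tendsto (fun u : ℝ =>
      (1 - u ^ (2:ℝ)) ^ p / (1 + u ^ p) * (φ (u^(p-1)) / u^(p-1)) * (u / D u) * u ^ (p-2))
      F (nhds 0) := by
    have := ((hN.mul hφslope).mul hinv).mul hs
    simpa using this
  -- eventually D u > 0, then eventual equality
  have hDpos : ∀ᶠ u in F, 0 < D u := by
    have hev : ∀ᶠ u in F, p < D u / u := hDslope.eventually_const_lt (by linarith)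
    filter_upwards [hev, hmem] with u h1 h2
    have : 0 < D u / u := lt_trans hp0 h1
    have := mul_pos this h2.1
    rwa [div_mul_cancel₀ _ (ne_of_gt h2.1)] at this
  refine hG.congr' ?_
  filter_upwards [hmem, hDpos] with u hu hD
  have hu0 : 0 < u := hu.1
  have ht : u ^ (p-1) = u ^ (p-2) * u := by
    rw [show p - 1 = (p-2) + 1 by ring, Real.rpow_add hu0, Real.rpow_one]
  have ht0 : u ^ (p-1) ≠ 0 := (Real.rpow_pos_of_pos hu0 _).ne'
  have hs0 : u ^ (p-2) ≠ 0 := (Real.rpow_pos_of_pos hu0 _).ne'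
  have h1p : (1:ℝ) + u ^ p ≠ 0 := by positivity
  show _ = f p u
  rw [f]
  rw [hφdef, hDdef]
  field_simp
  rw [ht]
  ring
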